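/- Let s ≥ 0 and let f : ℝ^d → [0,∞) be measurable and vanishing at infinity, with symmetric-decreasing rearrangement f*. Then ∫_{ℝ^d} f*(y) |y|^{2s} dy ≤ ∫_{ℝ^d} f(y) |y|^{2s} dy. -/

import Mathlib

open MeasureTheory Set Metric Filter Topology
open scoped ENNReal

/-- The symmetric-decreasing rearrangement of a nonnegative function `f` on `ℝ^d`,
defined via the layer-cake/distribution-function formula
`f*(x) = inf { t ≥ 0 : μ({f > t}) ≤ μ(B(0,|x|)) }`. -/
noncomputable def symmRearrange {d : ℕ} (f : EuclideanSpace ℝ (Fin d) → ℝ)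
    (x : EuclideanSpace ℝ (Fin d)) : ℝ :=
  sInf {t : ℝ | 0 ≤ t ∧
    volume {y : EuclideanSpace ℝ (Fin d) | t < f y} ≤
      volume (Metric.ball (0 : EuclideanSpace ℝ (Fin d)) ‖x‖)}

private theorem bathtub_core {α : Type*} [MeasurableSpace α] (μ : Measure α) (w : α → ℝ≥0∞)
    (A B : Set α) (hA : MeasurableSet A) (hB : MeasurableSet B)
    (hBA : μ B ≤ μ A) (hBfin : μ B ≠ ⊤)
    (hw : ∀ y ∈ B \ A, ∀ z ∈ A \ B, w y ≤ w z) :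
    ∫⁻ y in B, w y ∂μ ≤ ∫⁻ y in A, w y ∂μ := by
  classical
  set c : ℝ≥0∞ := ⨅ z ∈ A \ B, w z with hc
  have hvol : μ (B \ A) ≤ μ (A \ B) := by
    have h1 : μ (B \ A) + μ (B ∩ A) = μ B := by
      rw [← measure_union (disjoint_sdiff_left.mono_right inter_subset_right) (hB.inter hA)]
      congr 1
      rw [diff_union_inter]
    have h2 : μ (A \ B) + μ (A ∩ B) = μ A := by
      rw [← measure_union (disjoint_sdiff_left.mono_right inter_subset_right) (hA.inter hB)]
      congr 1
      rw [diff_union_inter]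
    have hk : μ (B ∩ A) ≠ ⊤ := (lt_of_le_of_lt (measure_mono inter_subset_left) hBfin.lt_top).ne
    have key : μ (B \ A) + μ (B ∩ A) ≤ μ (A \ B) + μ (B ∩ A) := by
      calc μ (B \ A) + μ (B ∩ A) = μ B := h1
        _ ≤ μ A := hBA
        _ = μ (A \ B) + μ (A ∩ B) := h2.symm
        _ = μ (A \ B) + μ (B ∩ A) := by rw [inter_comm]
    exact (ENNReal.add_le_add_iff_right hk).mp key
  have step1 : ∫⁻ y in B \ A, w y ∂μ ≤ c * μ (B \ A) := by
    have : ∀ y ∈ B \ A, w y ≤ c := by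
      intro y hy
      exact le_iInf₂ fun z hz => hw y hy z hz
    calc ∫⁻ y in B \ A, w y ∂μ ≤ ∫⁻ _ in B \ A, c ∂μ :=
          setLIntegral_mono' (hB.diff hA) this
      _ = c * μ (B \ A) := by rw [setLIntegral_const]
  have step2 : c * μ (A \ B) ≤ ∫⁻ y in A \ B, w y ∂μ := by
    calc c * μ (A \ B) = ∫⁻ _ in A \ B, c ∂μ := by rw [setLIntegral_const]
      _ ≤ ∫⁻ y in A \ B, w y ∂μ :=
          setLIntegral_mono' (hA.diff hB) (fun z hz => biInf_le w hz)
  have hsplitB : ∫⁻ y in B, w y ∂μ = ∫⁻ y in B ∩ A, w y ∂μ + ∫⁻ y in B \ A, w y ∂μ := by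
    rw [← lintegral_union ((hB.diff hA)) (disjoint_sdiff_right.mono_left inter_subset_right),
      inter_union_diff]
  have hsplitA : ∫⁻ y in A, w y ∂μ = ∫⁻ y in A ∩ B, w y ∂μ + ∫⁻ y in A \ B, w y ∂μ := by
    rw [← lintegral_union ((hA.diff hB)) (disjoint_sdiff_right.mono_left inter_subset_right),
      inter_union_diff]
  rw [hsplitB, hsplitA, inter_comm B A]
  gcongr _ + ?_
  exact step1.trans ((mul_le_mul_right hvol c).trans step2)

/-- **Rearrangement inequality for radially increasing weights.** Let `s ≥ 0` and let
`f : ℝ^d → [0,∞)` be measurable and vanishing at infinity. Then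
`∫ f*(y) |y|^{2s} dy ≤ ∫ f(y) |y|^{2s} dy`. -/
theorem rearrangement_weight_inequality (d : ℕ) (s : ℝ) (hs : 0 ≤ s)
    (f : EuclideanSpace ℝ (Fin d) → ℝ) (hf_meas : Measurable f)
    (hf_nonneg : ∀ x, 0 ≤ f x)
    (hf_vanish : ∀ t : ℝ, 0 < t → volume {y : EuclideanSpace ℝ (Fin d) | t < f y} < ⊤) :
    (∫⁻ y, ENNReal.ofReal (symmRearrange f y * ‖y‖ ^ (2 * s)) ∂volume) ≤
      (∫⁻ y, ENNReal.ofReal (f y * ‖y‖ ^ (2 * s)) ∂volume) := by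
  classical
  by_cases hd : d = 0
  · -- trivial zero-dimensional case: f* = f pointwise
    subst hd
    refine le_of_eq (lintegral_congr fun y => ?_)
    congr 2
    have hy0 : y = 0 := Subsingleton.elim y 0
    have hnorm : ‖y‖ = 0 := by rw [hy0]; simp
    have hSet : {t : ℝ | 0 ≤ t ∧
        volume {z : EuclideanSpace ℝ (Fin 0) | t < f z} ≤
          volume (Metric.ball (0 : EuclideanSpace ℝ (Fin 0)) ‖y‖)} = Ici (f y) := by
      ext t
      simp only [hnorm, Metric.ball_zero, measure_empty, nonpos_iff_eq_zero, mem_setOf_eq, mem_Ici]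
      constructor
      · rintro ⟨ht0, hvol⟩
        by_contra hlt
        push_neg at hlt
        have : {z : EuclideanSpace ℝ (Fin 0) | t < f z} = univ := by
          ext z
          simp [Subsingleton.elim z y, hlt]
        rw [this] at hvol
        exact ((isOpen_univ.measure_pos volume ⟨y, trivial⟩).ne' hvol)
      · intro hle
        refine ⟨le_trans (hf_nonneg y) hle, ?_⟩
        have : {z : EuclideanSpace ℝ (Fin 0) | t < f z} = ∅ := by
          ext z
          simp [Subsingleton.elim z y, not_lt.2 hle]
        rw [this, measure_empty]
    rw [symmRearrange, hSet, csInf_Ici]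
  -- main case: d ≥ 1
  have hdpos : 0 < d := Nat.pos_of_ne_zero hd
  haveI : Nonempty (Fin d) := ⟨⟨0, hdpos⟩⟩
  haveI : Nontrivial (EuclideanSpace ℝ (Fin d)) := by
    refine Module.nontrivial_of_finrank_pos (R := ℝ) ?_
    rw [finrank_euclideanSpace_fin]
    exact hdpos
  have h2s : (0:ℝ) ≤ 2 * s := by positivity
  set w : EuclideanSpace ℝ (Fin d) → ℝ≥0∞ := fun y => ENNReal.ofReal (‖y‖ ^ (2 * s)) with hw
  have hw_meas : Measurable w :=
    (((Real.continuous_rpow_const h2s).comp continuous_norm).measurable).ennreal_ofReal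
  set μ : Measure (EuclideanSpace ℝ (Fin d)) := volume.withDensity w with hμ
  set φ : ℝ → ℝ := fun r => sInf {t : ℝ | 0 ≤ t ∧
      volume {y : EuclideanSpace ℝ (Fin d) | t < f y} ≤
        volume (Metric.ball (0 : EuclideanSpace ℝ (Fin d)) r)} with hφ
  have hsymm : ∀ x : EuclideanSpace ℝ (Fin d), symmRearrange f x = φ ‖x‖ := fun x => rfl
  have hbdd : ∀ r : ℝ, BddBelow {t : ℝ | 0 ≤ t ∧
      volume {y : EuclideanSpace ℝ (Fin d) | t < f y} ≤
        volume (Metric.ball (0 : EuclideanSpace ℝ (Fin d)) r)} :=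
    fun r => ⟨0, fun t ht => ht.1⟩
  have hφ_nonneg : ∀ r, 0 ≤ φ r := fun r => Real.sInf_nonneg (fun t ht => ht.1)
  have hfstar_nonneg : ∀ x : EuclideanSpace ℝ (Fin d), 0 ≤ symmRearrange f x := by
    intro x; rw [hsymm]; exact hφ_nonneg _
  -- nonemptiness of the defining set for r > 0
  have hSne : ∀ r : ℝ, 0 < r → {t : ℝ | 0 ≤ t ∧
      volume {y : EuclideanSpace ℝ (Fin d) | t < f y} ≤
        volume (Metric.ball (0 : EuclideanSpace ℝ (Fin d)) r)}.Nonempty := by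
    intro r hr
    have hVr : 0 < volume (Metric.ball (0 : EuclideanSpace ℝ (Fin d)) r) :=
      measure_ball_pos volume 0 hr
    have htend : Tendsto (fun n : ℕ => volume {y : EuclideanSpace ℝ (Fin d) | (n : ℝ) + 1 < f y})
        atTop (𝓝 (volume (⋂ n : ℕ, {y : EuclideanSpace ℝ (Fin d) | (n : ℝ) + 1 < f y}))) := by
      refine tendsto_measure_iInter_atTop
        (fun n => (hf_meas measurableSet_Ioi).nullMeasurableSet) ?_ ⟨0, ?_⟩
      · intro m n hmn y hy
        simp only [mem_setOf_eq] at *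
        have : (m : ℝ) ≤ (n : ℝ) := Nat.cast_le.2 hmn
        linarith
      · simp only [Nat.cast_zero, zero_add]
        exact (hf_vanish 1 one_pos).ne
    have hiInter : (⋂ n : ℕ, {y : EuclideanSpace ℝ (Fin d) | (n : ℝ) + 1 < f y}) = ∅ := by
      ext y
      simp only [mem_iInter, mem_setOf_eq, mem_empty_iff_false, iff_false, not_forall, not_lt]
      obtain ⟨n, hn⟩ := exists_nat_gt (f y)
      exact ⟨n, by linarith⟩
    rw [hiInter, measure_empty] at htend
    obtain ⟨n, hn⟩ := (htend.eventually_lt_const hVr).exists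
    exact ⟨(n : ℝ) + 1, by positivity, hn.le⟩
  -- antitone on positive reals
  have hφ_anti : ∀ r₁ r₂ : ℝ, 0 < r₁ → r₁ ≤ r₂ → φ r₂ ≤ φ r₁ := by
    intro r₁ r₂ h1 h12
    refine csInf_le_csInf (hbdd r₂) (hSne r₁ h1) ?_
    intro t ht
    exact ⟨ht.1, ht.2.trans (measure_mono (Metric.ball_subset_ball h12))⟩
  -- a.e. measurability of f*
  have haem : AEMeasurable (fun x : EuclideanSpace ℝ (Fin d) => symmRearrange f x) volume := by
    have hψ : Antitone (fun u : ℝ => φ (Real.exp u)) := fun a b hab =>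
      hφ_anti (Real.exp a) (Real.exp b) (Real.exp_pos a) (Real.exp_le_exp.2 hab)
    have hgm : Measurable (fun x : EuclideanSpace ℝ (Fin d) => φ (Real.exp (Real.log ‖x‖))) :=
      hψ.measurable.comp measurable_norm.log
    refine ⟨fun x => φ (Real.exp (Real.log ‖x‖)), hgm, ?_⟩
    have h0 : ∀ᵐ x : EuclideanSpace ℝ (Fin d) ∂volume, x ≠ 0 := by
      rw [ae_iff]
      simpa using measure_singleton (0 : EuclideanSpace ℝ (Fin d))
    filter_upwards [h0] with x hx
    rw [hsymm, Real.exp_log (norm_pos_iff.2 hx)]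
  -- reduction to the weighted measure
  have hrw : ∀ g : EuclideanSpace ℝ (Fin d) → ℝ, AEMeasurable g volume → (∀ y, 0 ≤ g y) →
      ∫⁻ y, ENNReal.ofReal (g y * ‖y‖ ^ (2 * s)) ∂volume = ∫⁻ y, ENNReal.ofReal (g y) ∂μ := by
    intro g hg hgnn
    rw [hμ, lintegral_withDensity_eq_lintegral_mul₀ hw_meas.aemeasurable hg.ennreal_ofReal]
    refine lintegral_congr fun y => ?_
    simp only [Pi.mul_apply, hw]
    rw [ENNReal.ofReal_mul (hgnn y), mul_comm]
  -- layer cake representation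
  have hlayer : ∀ g : EuclideanSpace ℝ (Fin d) → ℝ, AEMeasurable g volume → (∀ y, 0 ≤ g y) →
      ∫⁻ y, ENNReal.ofReal (g y) ∂μ = ∫⁻ t in Ioi (0:ℝ), μ {y | t < g y} := by
    intro g hg hgnn
    exact lintegral_eq_lintegral_meas_lt μ (ae_of_all _ hgnn)
      (hg.mono_ac (withDensity_absolutelyContinuous volume w))
  -- the key pointwise bound on superlevel sets
  have hkey : ∀ t : ℝ, 0 < t →
      μ {x | t < symmRearrange f x} ≤ μ {y | t < f y} := by
    intro t ht
    have hA : MeasurableSet {y : EuclideanSpace ℝ (Fin d) | t < f y} :=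
      hf_meas measurableSet_Ioi
    have hmfin : volume {y : EuclideanSpace ℝ (Fin d) | t < f y} ≠ ⊤ := (hf_vanish t ht).ne
    by_cases hm0 : volume {y : EuclideanSpace ℝ (Fin d) | t < f y} = 0
    · have hempty : {x : EuclideanSpace ℝ (Fin d) | t < symmRearrange f x} = ∅ := by
        ext x
        simp only [mem_setOf_eq, mem_empty_iff_false, iff_false, not_lt]
        rw [hsymm]
        exact csInf_le (hbdd _) ⟨ht.le, hm0.le.trans zero_le⟩
      rw [hempty, measure_empty]
      exact zero_le
    · set m := volume {y : EuclideanSpace ℝ (Fin d) | t < f y} with hm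
      set κ := volume (Metric.ball (0 : EuclideanSpace ℝ (Fin d)) 1) with hκ
      have hκ0 : κ ≠ 0 := (measure_ball_pos volume 0 one_pos).ne'
      have hκt : κ ≠ ⊤ := measure_ball_lt_top.ne
      have hdivt : m / κ ≠ ⊤ := (ENNReal.div_lt_top hmfin hκ0).ne
      have hT0 : (0:ℝ) ≤ (m / κ).toReal := ENNReal.toReal_nonneg
      set R : ℝ := (m / κ).toReal ^ ((d : ℝ)⁻¹) with hR
      have hR0 : 0 ≤ R := Real.rpow_nonneg hT0 _
      have hRd : R ^ d = (m / κ).toReal := by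
        rw [hR, ← Real.rpow_natCast ((m / κ).toReal ^ ((d : ℝ)⁻¹)) d,
          ← Real.rpow_mul hT0, inv_mul_cancel₀ (Nat.cast_ne_zero.2 hd), Real.rpow_one]
      have hchar : ∀ x : EuclideanSpace ℝ (Fin d),
          volume (Metric.ball (0 : EuclideanSpace ℝ (Fin d)) ‖x‖) < m ↔ ‖x‖ < R := by
        intro x
        rw [Measure.addHaar_ball volume 0 (norm_nonneg x), finrank_euclideanSpace_fin, ← hκ,
          ← ENNReal.lt_div_iff_mul_lt (Or.inl hκ0) (Or.inl hκt),
          ENNReal.ofReal_lt_iff_lt_toReal (by positivity) hdivt, ← hRd]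
        exact pow_lt_pow_iff_left₀ (norm_nonneg x) hR0 hd
      have hBvol : volume (Metric.ball (0 : EuclideanSpace ℝ (Fin d)) R) = m := by
        rw [Measure.addHaar_ball volume 0 hR0, finrank_euclideanSpace_fin, hRd,
          ENNReal.ofReal_toReal hdivt, ← hκ, ENNReal.div_mul_cancel hκ0 hκt]
      have hsub : {x : EuclideanSpace ℝ (Fin d) | t < symmRearrange f x} ⊆
          Metric.ball (0 : EuclideanSpace ℝ (Fin d)) R := by
        intro x hx
        rw [mem_setOf_eq, hsymm] at hx
        rw [mem_ball, dist_zero_right, ← hchar x]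
        by_contra hcon
        push_neg at hcon
        exact absurd hx (not_lt.2 (csInf_le (hbdd _) ⟨ht.le, hcon⟩))
      calc μ {x | t < symmRearrange f x}
          ≤ μ (Metric.ball (0 : EuclideanSpace ℝ (Fin d)) R) := measure_mono hsub
        _ = ∫⁻ y in Metric.ball (0 : EuclideanSpace ℝ (Fin d)) R, w y ∂volume :=
            withDensity_apply w measurableSet_ball
        _ ≤ ∫⁻ y in {y | t < f y}, w y ∂volume := by
            refine bathtub_core volume w _ _ hA measurableSet_ball
              (by rw [hBvol]) (by rw [hBvol]; exact hmfin) ?_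
            intro y hy z hz
            have hy' : ‖y‖ < R := by
              have := hy.1
              rwa [mem_ball, dist_zero_right] at this
            have hz' : R ≤ ‖z‖ := by
              have := hz.2
              rw [mem_ball, dist_zero_right] at this
              exact not_lt.1 this
            exact ENNReal.ofReal_le_ofReal
              (Real.rpow_le_rpow (norm_nonneg y) (hy'.le.trans hz') h2s)
        _ = μ {y | t < f y} := (withDensity_apply w hA).symm
  calc ∫⁻ y, ENNReal.ofReal (symmRearrange f y * ‖y‖ ^ (2 * s)) ∂volume
      = ∫⁻ y, ENNReal.ofReal (symmRearrange f y) ∂μ := hrw _ haem hfstar_nonneg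
    _ = ∫⁻ t in Ioi (0:ℝ), μ {x | t < symmRearrange f x} := hlayer _ haem hfstar_nonneg
    _ ≤ ∫⁻ t in Ioi (0:ℝ), μ {y | t < f y} := by
        refine lintegral_mono_ae ?_
        refine (ae_restrict_iff' measurableSet_Ioi).2 (ae_of_all _ fun t ht => hkey t ht)
    _ = ∫⁻ y, ENNReal.ofReal (f y) ∂μ := (hlayer f hf_meas.aemeasurable hf_nonneg).symm
    _ = ∫⁻ y, ENNReal.ofReal (f y * ‖y‖ ^ (2 * s)) ∂volume :=
        (hrw f hf_meas.aemeasurable hf_nonneg).symm
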